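/- Let R be a local ring. Every matrix A in GL_n(R) with det(A) = 1 is a product of elementary transvections (matrices differing from the identity only in one off-diagonal entry). -/
import Mathlib

open Matrix Matrix.TransvectionStruct Sum

namespace Stmt0Aux

variable {R : Type*} [CommRing R] {r : ℕ}

lemma det_prod_transvec {n : Type*} [DecidableEq n] [Fintype n]
    (L : List (TransvectionStruct n R)) : ((L.map toMatrix).prod).det = 1 := by
  induction L with
  | nil => simp
  | cons t L IH => simp [IH]

lemma exists_unit_in_col [IsLocalRing R] {n : Type*} [Fintype n] [DecidableEq n]
    (M : Matrix n n R) (hM : M.det = 1) (j : n) : ∃ i, IsUnit (M i j) := by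
  by_contra h
  push_neg at h
  have hmem : ∀ i, M i j ∈ IsLocalRing.maximalIdeal R := fun i =>
    (IsLocalRing.mem_maximalIdeal _).2 (h i)
  have key : ∑ k, M.adjugate j k * M k j = M.det := by
    have := congrFun (congrFun (Matrix.adjugate_mul M) j) j
    simpa [Matrix.mul_apply, Matrix.one_apply] using this
  have : M.det ∈ IsLocalRing.maximalIdeal R := by
    rw [← key]
    exact Ideal.sum_mem _ fun k _ => Ideal.mul_mem_left _ _ (hmem k)
  rw [hM] at this
  exact ((IsLocalRing.mem_maximalIdeal _).1 this) isUnit_one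

lemma col_clear (l : List (Fin r)) (hl : l.Nodup) (f : Fin r → R)
    (N : Matrix (Fin r ⊕ Unit) (Fin r ⊕ Unit) R) (q : Fin r ⊕ Unit) :
    (∀ i : Fin r,
      (((l.map fun i => transvection (inl i) (inr Unit.unit) (f i)).prod) * N) (inl i) q
        = N (inl i) q + (if i ∈ l then f i * N (inr Unit.unit) q else 0)) ∧
    ((((l.map fun i => transvection (inl i) (inr Unit.unit) (f i)).prod) * N)
        (inr Unit.unit) q = N (inr Unit.unit) q) := by
  induction l with
  | nil => simp
  | cons a l IH =>
    have hal : a ∉ l := (List.nodup_cons.1 hl).1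
    obtain ⟨IH1, IH2⟩ := IH (List.nodup_cons.1 hl).2
    set M' := ((l.map fun i => transvection (inl i) (inr Unit.unit) (f i)).prod) * N with hM'
    have hprod : ((((a :: l).map fun i => transvection (inl i) (inr Unit.unit) (f i)).prod) * N)
        = transvection (inl a) (inr Unit.unit) (f a) * M' := by
      simp [hM', Matrix.mul_assoc]
    rw [hprod]
    constructor
    · intro i
      by_cases hia : i = a
      · subst hia
        rw [Matrix.transvection_mul_apply_same, IH1, IH2, if_neg hal, if_pos (by simp)]
        ring
      · rw [Matrix.transvection_mul_apply_of_ne _ _ _ _ (by simpa using hia), IH1]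
        simp [hia]
    · rw [Matrix.transvection_mul_apply_of_ne _ _ _ _ (by simp), IH2]

lemma row_clear (l : List (Fin r)) (hl : l.Nodup) (f : Fin r → R)
    (N : Matrix (Fin r ⊕ Unit) (Fin r ⊕ Unit) R) (p : Fin r ⊕ Unit) :
    (∀ i : Fin r,
      (N * ((l.map fun i => transvection (inr Unit.unit) (inl i) (f i)).prod)) p (inl i)
        = N p (inl i) + (if i ∈ l then f i * N p (inr Unit.unit) else 0)) ∧
    ((N * ((l.map fun i => transvection (inr Unit.unit) (inl i) (f i)).prod))
        p (inr Unit.unit) = N p (inr Unit.unit)) := by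
  induction l generalizing N with
  | nil => simp
  | cons a l IH =>
    have hal : a ∉ l := (List.nodup_cons.1 hl).1
    set N' := N * transvection (inr Unit.unit) (inl a) (f a) with hN'
    obtain ⟨IH1, IH2⟩ := IH (List.nodup_cons.1 hl).2 N'
    have hprod : (N * (((a :: l).map fun i => transvection (inr Unit.unit) (inl i) (f i)).prod))
        = N' * ((l.map fun i => transvection (inr Unit.unit) (inl i) (f i)).prod) := by
      simp [hN', Matrix.mul_assoc]
    rw [hprod]
    have hNcol : ∀ q, q ≠ inl a → N' p q = N p q := by
      intro q hq
      rw [hN']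
      exact Matrix.mul_transvection_apply_of_ne _ _ _ _ (by simpa [eq_comm] using hq) _ _
    have hNa : N' p (inl a) = N p (inl a) + f a * N p (inr Unit.unit) := by
      rw [hN', Matrix.mul_transvection_apply_same]
    constructor
    · intro i
      by_cases hia : i = a
      · subst hia
        rw [IH1, if_neg hal, hNa, if_pos (by simp)]
        ring
      · rw [IH1, hNcol _ (by simpa using hia), hNcol _ (by simp)]
        simp [hia]
    · rw [IH2, hNcol _ (by simp)]

lemma pivot_one (j₀ : Fin r) (M : Matrix (Fin r ⊕ Unit) (Fin r ⊕ Unit) R)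
    (h : ∃ i, IsUnit (M i (inr Unit.unit))) :
    ∃ Lp : List (TransvectionStruct (Fin r ⊕ Unit) R),
      ((Lp.map toMatrix).prod * M) (inr Unit.unit) (inr Unit.unit) = 1 := by
  obtain ⟨i, hi⟩ := h
  cases i with
  | inl i₀ =>
    refine ⟨[⟨inr Unit.unit, inl i₀, by simp,
      (1 - M (inr Unit.unit) (inr Unit.unit)) * ↑hi.unit⁻¹⟩], ?_⟩
    simp only [List.map_cons, List.map_nil, List.prod_cons, List.prod_nil, Matrix.mul_one,
      toMatrix_mk]
    rw [Matrix.transvection_mul_apply_same, mul_assoc, hi.val_inv_mul]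
    ring
  | inr u =>
    have hu : IsUnit (M (inr Unit.unit) (inr Unit.unit)) := by cases u; exact hi
    set c₁ := (1 - M (inl j₀) (inr Unit.unit)) * ↑hu.unit⁻¹ with hc₁
    set T₁ := transvection (inl j₀) (inr Unit.unit) c₁ with hT₁
    have h1 : (T₁ * M) (inl j₀) (inr Unit.unit) = 1 := by
      rw [hT₁, Matrix.transvection_mul_apply_same, hc₁, mul_assoc, hu.val_inv_mul]
      ring
    have h2 : (T₁ * M) (inr Unit.unit) (inr Unit.unit)
        = M (inr Unit.unit) (inr Unit.unit) := by
      rw [hT₁]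
      exact Matrix.transvection_mul_apply_of_ne _ _ _ _ (by simp) _ _
    refine ⟨[⟨inr Unit.unit, inl j₀, by simp, 1 - M (inr Unit.unit) (inr Unit.unit)⟩,
      ⟨inl j₀, inr Unit.unit, by simp, c₁⟩], ?_⟩
    simp only [List.map_cons, List.map_nil, List.prod_cons, List.prod_nil, Matrix.mul_one,
      toMatrix_mk, Matrix.mul_assoc]
    rw [← hT₁, Matrix.transvection_mul_apply_same, h1, h2]
    ring

lemma step [IsLocalRing R]
    (IH : ∀ B : Matrix (Fin r) (Fin r) R, B.det = 1 →
      ∃ L L' : List (TransvectionStruct (Fin r) R),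
        (L.map toMatrix).prod * B * (L'.map toMatrix).prod = 1)
    (M : Matrix (Fin r ⊕ Unit) (Fin r ⊕ Unit) R) (hM : M.det = 1) :
    ∃ L L' : List (TransvectionStruct (Fin r ⊕ Unit) R),
      (L.map toMatrix).prod * M * (L'.map toMatrix).prod = 1 := by
  obtain _ | r' := r
  · haveI : Unique (Fin 0 ⊕ Unit) :=
      ⟨⟨inr Unit.unit⟩, by
        rintro (⟨_, h⟩ | u)
        · omega
        · cases u; rfl⟩
    refine ⟨[], [], ?_⟩
    simp only [List.map_nil, List.prod_nil, Matrix.one_mul, Matrix.mul_one]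
    ext a b
    rw [Unique.eq_default a, Unique.eq_default b, Matrix.one_apply_eq,
      ← Matrix.det_unique M, hM]
  · obtain ⟨Lp, hLp⟩ := pivot_one (0 : Fin (r' + 1)) M (exists_unit_in_col M hM _)
    set N := (Lp.map toMatrix).prod * M with hN
    set lc : List (TransvectionStruct (Fin (r' + 1) ⊕ Unit) R) :=
      (List.finRange (r' + 1)).map fun i =>
        ⟨inl i, inr Unit.unit, by simp, -(N (inl i) (inr Unit.unit))⟩ with hlc
    have hlcmap : lc.map toMatrix = (List.finRange (r' + 1)).map
        fun i => transvection (inl i) (inr Unit.unit) (-(N (inl i) (inr Unit.unit))) := by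
      simp [hlc, List.map_map, Function.comp_def]
    set N₂ := (lc.map toMatrix).prod * N with hN₂
    have hc := fun q => col_clear (List.finRange (r' + 1)) (List.nodup_finRange _)
      (fun i => -(N (inl i) (inr Unit.unit))) N q
    have hN₂col : ∀ i, N₂ (inl i) (inr Unit.unit) = 0 := by
      intro i
      rw [hN₂, hlcmap, (hc _).1 i, if_pos (List.mem_finRange _), hLp]
      ring
    have hN₂last : ∀ q, N₂ (inr Unit.unit) q = N (inr Unit.unit) q := by
      intro q
      rw [hN₂, hlcmap]
      exact (hc q).2
    have hN₂piv : N₂ (inr Unit.unit) (inr Unit.unit) = 1 := by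
      rw [hN₂last]; exact hLp
    set lr : List (TransvectionStruct (Fin (r' + 1) ⊕ Unit) R) :=
      (List.finRange (r' + 1)).map fun i =>
        ⟨inr Unit.unit, inl i, by simp, -(N₂ (inr Unit.unit) (inl i))⟩ with hlr
    have hlrmap : lr.map toMatrix = (List.finRange (r' + 1)).map
        fun i => transvection (inr Unit.unit) (inl i) (-(N₂ (inr Unit.unit) (inl i))) := by
      simp [hlr, List.map_map, Function.comp_def]
    set N₃ := N₂ * (lr.map toMatrix).prod with hN₃
    have hr := fun p => row_clear (List.finRange (r' + 1)) (List.nodup_finRange _)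
      (fun i => -(N₂ (inr Unit.unit) (inl i))) N₂ p
    have hN₃col : ∀ p, N₃ p (inr Unit.unit) = N₂ p (inr Unit.unit) := by
      intro p
      rw [hN₃, hlrmap]
      exact (hr p).2
    have hN₃row : ∀ i, N₃ (inr Unit.unit) (inl i) = 0 := by
      intro i
      rw [hN₃, hlrmap, (hr _).1 i, if_pos (List.mem_finRange _), hN₂piv]
      ring
    set B := Matrix.toBlocks₁₁ N₃ with hB
    have hN₃blocks : N₃ = fromBlocks B 0 0 1 := by
      ext a b
      cases a with
      | inl i =>
        cases b with
        | inl j => simp [hB, Matrix.toBlocks₁₁]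
        | inr u =>
          cases u
          simpa [Matrix.fromBlocks] using (hN₃col (inl i)).trans (hN₂col i)
      | inr u =>
        cases u
        cases b with
        | inl j => simpa [Matrix.fromBlocks] using hN₃row j
        | inr v =>
          cases v
          simpa [Matrix.fromBlocks] using (hN₃col (inr Unit.unit)).trans hN₂piv
    have hdetN₃ : N₃.det = 1 := by
      rw [hN₃, hN₂, hN]
      simp [Matrix.det_mul, det_prod_transvec, hM]
    have hdetB : B.det = 1 := by
      rw [hN₃blocks] at hdetN₃
      simpa [Matrix.det_fromBlocks_zero₂₁] using hdetN₃
    obtain ⟨L₀, L₀', h₀⟩ := IH B hdetB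
    refine ⟨(L₀.map (sumInl Unit)) ++ lc ++ Lp, lr ++ (L₀'.map (sumInl Unit)), ?_⟩
    have key : (L₀.map (toMatrix ∘ sumInl Unit)).prod * N₃ *
        (L₀'.map (toMatrix ∘ sumInl Unit)).prod = 1 := by
      rw [hN₃blocks, sumInl_toMatrix_prod_mul, mul_sumInl_toMatrix_prod, h₀,
        ← Matrix.fromBlocks_one]
    rw [hN₃, hN₂, hN] at key
    simp only [List.map_append, List.prod_append, List.map_map]
    simpa [Matrix.mul_assoc] using key

lemma reindex_one {n p : Type*} [Fintype n] [Fintype p] [DecidableEq n] [DecidableEq p]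
    (M : Matrix p p R) (e : p ≃ n)
    (H : ∃ L L' : List (TransvectionStruct n R),
      (L.map toMatrix).prod * Matrix.reindexAlgEquiv R _ e M * (L'.map toMatrix).prod = 1) :
    ∃ L L' : List (TransvectionStruct p R),
      (L.map toMatrix).prod * M * (L'.map toMatrix).prod = 1 := by
  obtain ⟨L₀, L₀', h₀⟩ := H
  refine ⟨L₀.map (reindexEquiv e.symm), L₀'.map (reindexEquiv e.symm), ?_⟩
  have hM : M = reindexAlgEquiv R _ e.symm (reindexAlgEquiv R _ e M) := by
    simp only [Equiv.symm_symm, submatrix_submatrix, reindex_apply, submatrix_id_id,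
      Equiv.symm_comp_self, reindexAlgEquiv_apply]
  rw [hM]
  simp only [List.map_map, toMatrix_reindexEquiv_prod]
  simp only [← _root_.map_mul, h₀, _root_.map_one]

lemma aux [IsLocalRing R] : ∀ (r : ℕ) (n : Type) [Fintype n] [DecidableEq n],
    Fintype.card n = r → ∀ M : Matrix n n R, M.det = 1 →
    ∃ L L' : List (TransvectionStruct n R),
      (L.map toMatrix).prod * M * (L'.map toMatrix).prod = 1 := by
  intro r
  induction r with
  | zero =>
    intro n _ _ hn M _
    refine ⟨[], [], ?_⟩
    simp only [List.map_nil, List.prod_nil, Matrix.one_mul, Matrix.mul_one]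
    ext i j
    exact ((Fintype.card_eq_zero_iff.1 hn).elim i)
  | succ r IH =>
    intro n _ _ hn M hM
    have e : n ≃ Fin r ⊕ Unit := Fintype.equivOfCardEq (by simp [hn])
    apply reindex_one M e
    apply step (fun B hB => IH (Fin r) (by simp) B hB)
    rw [reindexAlgEquiv_apply, Matrix.det_reindex_self]
    exact hM

end Stmt0Aux

/-- Over a local ring `R`, every matrix `A ∈ GL_n(R)` with
`det A = 1` is a product of elementary transvections. -/
theorem stmt_0 {R : Type*} [CommRing R] [IsLocalRing R] {n : ℕ}
    (A : Matrix (Fin n) (Fin n) R) (hA : A.det = 1) :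
    ∃ L : List (Matrix.TransvectionStruct (Fin n) R),
      A = (L.map Matrix.TransvectionStruct.toMatrix).prod := by
  obtain ⟨L, L', h⟩ := Stmt0Aux.aux n (Fin n) (by simp) A hA
  refine ⟨L.reverse.map Matrix.TransvectionStruct.inv ++
    L'.reverse.map Matrix.TransvectionStruct.inv, ?_⟩
  have h1 := Matrix.TransvectionStruct.reverse_inv_prod_mul_prod L
  have h2 := Matrix.TransvectionStruct.prod_mul_reverse_inv_prod L'
  calc A = 1 * A * 1 := by rw [Matrix.one_mul, Matrix.mul_one]
    _ = ((L.reverse.map (Matrix.TransvectionStruct.toMatrix ∘ Matrix.TransvectionStruct.inv)).prod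
          * (L.map Matrix.TransvectionStruct.toMatrix).prod) * A *
        ((L'.map Matrix.TransvectionStruct.toMatrix).prod *
          (L'.reverse.map (Matrix.TransvectionStruct.toMatrix ∘
            Matrix.TransvectionStruct.inv)).prod) := by rw [h1, h2]
    _ = (L.reverse.map (Matrix.TransvectionStruct.toMatrix ∘ Matrix.TransvectionStruct.inv)).prod
          * ((L.map Matrix.TransvectionStruct.toMatrix).prod * A *
            (L'.map Matrix.TransvectionStruct.toMatrix).prod) *
        (L'.reverse.map (Matrix.TransvectionStruct.toMatrix ∘
            Matrix.TransvectionStruct.inv)).prod := by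
          simp only [Matrix.mul_assoc]
    _ = (L.reverse.map (Matrix.TransvectionStruct.toMatrix ∘ Matrix.TransvectionStruct.inv)).prod
          * (L'.reverse.map (Matrix.TransvectionStruct.toMatrix ∘
            Matrix.TransvectionStruct.inv)).prod := by rw [h, Matrix.mul_one]
    _ = ((L.reverse.map Matrix.TransvectionStruct.inv ++
          L'.reverse.map Matrix.TransvectionStruct.inv).map
            Matrix.TransvectionStruct.toMatrix).prod := by
          simp [List.map_map]
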